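/- Second-moment smoothness of the uniform smoothing gradient estimator: for every β > 0 and all x, y ∈ ℝ^d, E_{u ~ Unif(S)} ‖(d/β)(f(x + βu) − f(x)) u − (d/β)(f(y + βu) − f(y)) u‖² ≤ 3 d L² ‖x − y‖² + (3/2) L² d² β². -/

import Mathlib

open MeasureTheory

open Metric Set Measure
open scoped RealInnerProductSpace

section Aux

variable {V : Type*} [NormedAddCommGroup V] [InnerProductSpace ℝ V] [CompleteSpace V]

local notation "E" d => EuclideanSpace ℝ (Fin d)


lemma grad_cont (f : V → ℝ) (L : ℝ)
    (hLip : ∀ u v, ‖gradient f u - gradient f v‖ ≤ L * ‖u - v‖) :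
    Continuous (gradient f) := by
  have : LipschitzWith (Real.toNNReal L) (gradient f) := by
    apply LipschitzWith.of_dist_le_mul
    intro a b
    rw [dist_eq_norm, dist_eq_norm]
    exact (hLip a b).trans (mul_le_mul_of_nonneg_right (Real.le_coe_toNNReal L) (norm_nonneg _))
  exact this.continuous

lemma taylor_bound (f : V → ℝ) (L : ℝ)
    (hdiff : Differentiable ℝ f)
    (hLip : ∀ u v, ‖gradient f u - gradient f v‖ ≤ L * ‖u - v‖)
    (z v : V) :
    |f (z + v) - f z - ⟪gradient f z, v⟫| ≤ L / 2 * ‖v‖ ^ 2 := by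
  have hcont : Continuous (gradient f) := grad_cont f L hLip
  have hderiv : ∀ t : ℝ, HasDerivAt (fun t : ℝ => f (z + t • v))
      ⟪gradient f (z + t • v), v⟫ t := by
    intro t
    have h1 : HasDerivAt (fun t : ℝ => z + t • v) v t := by
      simpa using ((hasDerivAt_id t).smul_const v).const_add z
    exact ((hdiff (z + t • v)).hasGradientAt.hasFDerivAt).comp_hasDerivAt t h1
  have hcont2 : Continuous fun t : ℝ => ⟪gradient f (z + t • v), v⟫ := by
    apply Continuous.inner
    · exact hcont.comp (continuous_const.add (continuous_id.smul continuous_const))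
    · exact continuous_const
  have hFTC : f (z + v) - f z = ∫ t in (0:ℝ)..1, ⟪gradient f (z + t • v), v⟫ := by
    have := intervalIntegral.integral_eq_sub_of_hasDerivAt
      (f := fun t : ℝ => f (z + t • v)) (a := 0) (b := 1)
      (fun t _ => hderiv t) (hcont2.intervalIntegrable 0 1)
    rw [this]; norm_num
  have hsub : f (z + v) - f z - ⟪gradient f z, v⟫
      = ∫ t in (0:ℝ)..1, (⟪gradient f (z + t • v), v⟫ - ⟪gradient f z, v⟫) := by
    rw [intervalIntegral.integral_sub (hcont2.intervalIntegrable 0 1)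
      (intervalIntegrable_const), intervalIntegral.integral_const, ← hFTC]
    simp
  rw [hsub]
  have hbd : ∀ t ∈ Set.Icc (0:ℝ) 1,
      |⟪gradient f (z + t • v), v⟫ - ⟪gradient f z, v⟫| ≤ (L * ‖v‖ ^ 2) * t := by
    intro t ht
    rw [← inner_sub_left]
    refine (abs_real_inner_le_norm _ _).trans ?_
    have := hLip (z + t • v) z
    simp only [add_sub_cancel_left] at this
    refine (mul_le_mul_of_nonneg_right this (norm_nonneg v)).trans ?_
    rw [norm_smul, Real.norm_eq_abs, abs_of_nonneg ht.1]
    ring_nf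
    nlinarith [norm_nonneg v, ht.1]
  calc |∫ t in (0:ℝ)..1, (⟪gradient f (z + t • v), v⟫ - ⟪gradient f z, v⟫)|
      ≤ ∫ t in (0:ℝ)..1, |⟪gradient f (z + t • v), v⟫ - ⟪gradient f z, v⟫| := by
        exact intervalIntegral.abs_integral_le_integral_abs zero_le_one
    _ ≤ ∫ t in (0:ℝ)..1, (L * ‖v‖ ^ 2) * t := by
        apply intervalIntegral.integral_mono_on zero_le_one
        · exact ((hcont2.sub continuous_const).abs).intervalIntegrable 0 1
        · exact (continuous_const.mul continuous_id).intervalIntegrable 0 1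
        · intro t ht
          exact hbd t ht
    _ = L / 2 * ‖v‖ ^ 2 := by
        rw [intervalIntegral.integral_const_mul, integral_id]
        ring

lemma polar_eq (d : ℕ) (hd : 1 ≤ d) (Φ : (E d) → ℝ) :
    ∫ x, Φ x = ∫ p : sphere (0 : E d) 1 × Ioi (0:ℝ),
      Φ ((p.2 : ℝ) • (p.1 : E d))
      ∂((volume : Measure (E d)).toSphere.prod
        (volumeIoiPow (Module.finrank ℝ (E d) - 1))) := by
  haveI : Nontrivial (E d) := by
    refine Module.nontrivial_of_finrank_pos (R := ℝ) ?_
    rw [finrank_euclideanSpace_fin]; omega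
  have h1 : ∫ x, Φ x ∂(volume : Measure (E d)) =
      ∫ x : ({0}ᶜ : Set (E d)), Φ x ∂((volume : Measure (E d)).comap Subtype.val) := by
    rw [integral_subtype_comap (measurableSet_singleton _).compl, restrict_compl_singleton]
  rw [h1]
  have h2 := (volume : Measure (E d)).measurePreserving_homeomorphUnitSphereProd.integral_comp
    (Homeomorph.measurableEmbedding _)
    (fun p : sphere (0 : E d) 1 × Ioi (0:ℝ) => Φ ((p.2 : ℝ) • (p.1 : E d)))
  rw [← h2]
  refine integral_congr_ae (Filter.Eventually.of_forall fun x => ?_)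
  simp only [homeomorphUnitSphereProd_apply_fst_coe, homeomorphUnitSphereProd_apply_snd_coe]
  rw [smul_inv_smul₀ (norm_ne_zero_iff.2 x.2)]

lemma sphere_moment (d : ℕ) (hd : 1 ≤ d) (g : E d) :
    ∫ u : sphere (0 : E d) 1, ⟪g, (u : E d)⟫ ^ 2 ∂((volume : Measure (E d)).toSphere)
      = ‖g‖ ^ 2 / d * (((volume : Measure (E d)).toSphere) univ).toReal := by
  haveI : Nontrivial (E d) := by
    refine Module.nontrivial_of_finrank_pos (R := ℝ) ?_
    rw [finrank_euclideanSpace_fin]; omega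
  set μS := ((volume : Measure (E d)).toSphere) with hμS
  set ind : (E d) → ℝ := (closedBall (0 : E d) 1).indicator (fun _ => 1) with hind
  set B : Ioi (0:ℝ) → ℝ :=
    fun r => ((r:ℝ) ^ 2) * ({r : Ioi (0:ℝ) | (r:ℝ) ≤ 1}).indicator (fun _ => (1:ℝ)) r with hB
  set C : ℝ := ∫ r : Ioi (0:ℝ), B r ∂(volumeIoiPow (Module.finrank ℝ (E d) - 1)) with hC
  set massR : ℝ := (μS univ).toReal with hmass
  -- indicator rewriting and integrability
  have hrw : ∀ F : (E d) → ℝ, (fun x => F x * ind x) = (closedBall (0 : E d) 1).indicator F := by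
    intro F
    funext x
    by_cases h : x ∈ closedBall (0 : E d) 1 <;>
      simp [hind, Set.indicator_of_mem, Set.indicator_of_notMem, h]
  have hint : ∀ F : (E d) → ℝ, Continuous F →
      Integrable (fun x => F x * ind x) (volume : Measure (E d)) := by
    intro F hF
    rw [hrw]
    exact (hF.continuousOn.integrableOn_compact (isCompact_closedBall _ _)).integrable_indicator
      measurableSet_closedBall
  -- pointwise polar factorization
  have hfact : ∀ w : E d, ∀ p : sphere (0 : E d) 1 × Ioi (0:ℝ),
      ⟪w, ((p.2 : ℝ) • (p.1 : E d))⟫ ^ 2 * ind ((p.2 : ℝ) • (p.1 : E d))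
        = ⟪w, (p.1 : E d)⟫ ^ 2 * B p.2 := by
    intro w p
    have hu : ‖(p.1 : E d)‖ = 1 := mem_sphere_zero_iff_norm.mp p.1.2
    have hr : (0:ℝ) < p.2 := p.2.2
    have hnorm : ‖(p.2 : ℝ) • (p.1 : E d)‖ = (p.2 : ℝ) := by
      rw [norm_smul, hu, Real.norm_eq_abs, abs_of_pos hr, mul_one]
    have hmem : ((p.2 : ℝ) • (p.1 : E d)) ∈ closedBall (0 : E d) 1 ↔ (p.2 : ℝ) ≤ 1 := by
      rw [mem_closedBall_zero_iff, hnorm]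
    rw [real_inner_smul_right]
    simp only [hind, hB]
    by_cases h : (p.2 : ℝ) ≤ 1
    · rw [Set.indicator_of_mem (hmem.mpr h),
        Set.indicator_of_mem (show p.2 ∈ {r : Ioi (0:ℝ) | (r:ℝ) ≤ 1} from h)]
      ring
    · rw [Set.indicator_of_notMem (fun hc => h (hmem.mp hc)),
        Set.indicator_of_notMem (show p.2 ∉ {r : Ioi (0:ℝ) | (r:ℝ) ≤ 1} from h)]
      ring
  -- M1
  have hM1 : ∀ w : E d, ∫ x, ⟪w, x⟫ ^ 2 * ind x
      = (∫ u : sphere (0 : E d) 1, ⟪w, (u : E d)⟫ ^ 2 ∂μS) * C := by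
    intro w
    rw [polar_eq d hd (fun x => ⟪w, x⟫ ^ 2 * ind x)]
    rw [show (fun p : sphere (0 : E d) 1 × Ioi (0:ℝ) =>
        ⟪w, ((p.2 : ℝ) • (p.1 : E d))⟫ ^ 2 * ind ((p.2 : ℝ) • (p.1 : E d)))
      = fun p => (fun u : sphere (0 : E d) 1 => ⟪w, (u : E d)⟫ ^ 2) p.1 * B p.2
      from funext (hfact w)]
    exact integral_prod_mul (fun u : sphere (0 : E d) 1 => ⟪w, (u : E d)⟫ ^ 2) B
  -- M2
  have hM2 : ∫ x, ‖x‖ ^ 2 * ind x = massR * C := by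
    rw [polar_eq d hd (fun x => ‖x‖ ^ 2 * ind x)]
    have : (fun p : sphere (0 : E d) 1 × Ioi (0:ℝ) =>
        ‖(p.2 : ℝ) • (p.1 : E d)‖ ^ 2 * ind ((p.2 : ℝ) • (p.1 : E d)))
        = fun p => (fun _ : sphere (0 : E d) 1 => (1:ℝ)) p.1 * B p.2 := by
      funext p
      have hu : ‖(p.1 : E d)‖ = 1 := mem_sphere_zero_iff_norm.mp p.1.2
      have hr : (0:ℝ) < p.2 := p.2.2
      have hnorm : ‖(p.2 : ℝ) • (p.1 : E d)‖ = (p.2 : ℝ) := by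
        rw [norm_smul, hu, Real.norm_eq_abs, abs_of_pos hr, mul_one]
      have hmem : ((p.2 : ℝ) • (p.1 : E d)) ∈ closedBall (0 : E d) 1 ↔ (p.2 : ℝ) ≤ 1 := by
        rw [mem_closedBall_zero_iff, hnorm]
      simp only [hind, hB, hnorm]
      by_cases h : (p.2 : ℝ) ≤ 1
      · rw [Set.indicator_of_mem (hmem.mpr h),
          Set.indicator_of_mem (show p.2 ∈ {r : Ioi (0:ℝ) | (r:ℝ) ≤ 1} from h)]
        ring
      · rw [Set.indicator_of_notMem (fun hc => h (hmem.mp hc)),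
          Set.indicator_of_notMem (show p.2 ∉ {r : Ioi (0:ℝ) | (r:ℝ) ≤ 1} from h)]
        ring
    rw [this, integral_prod_mul (fun _ : sphere (0 : E d) 1 => (1:ℝ)) B, integral_const]
    show (massR • (1:ℝ)) * C = massR * C
    rw [smul_eq_mul, mul_one]
  -- direction independence
  have hd0 : (d:ℝ) ≠ 0 := Nat.cast_ne_zero.mpr (by omega)
  set i0 : Fin d := ⟨0, hd⟩ with hi0
  set J0 : ℝ := ∫ x, ⟪EuclideanSpace.single i0 (1:ℝ), x⟫ ^ 2 * ind x with hJ0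
  have hdir : ∀ w : E d, ‖w‖ = 1 →
      ∫ x, ⟪w, x⟫ ^ 2 * ind x = J0 := by
    intro w hw
    have hcard : Module.finrank ℝ (E d) = Fintype.card (Fin d) := by
      simp [finrank_euclideanSpace_fin]
    have horth : Orthonormal ℝ (Set.restrict {i0} (fun _ : Fin d => w)) := by
      constructor
      · intro i; exact hw
      · intro i j hij
        exfalso
        apply hij
        apply Subtype.ext
        have hi := i.2; have hj := j.2
        simp only [mem_singleton_iff] at hi hj
        rw [hi, hj]
    obtain ⟨b, hb⟩ := horth.exists_orthonormalBasis_extension_of_card_eq hcard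
    have hbw : b i0 = w := hb i0 (mem_singleton _)
    set e := b.repr.symm with he
    have hmp : MeasurePreserving e (volume : Measure (E d)) (volume : Measure (E d)) :=
      e.measurePreserving
    have hcomp := hmp.integral_comp (e.toHomeomorph.measurableEmbedding)
      (fun x : E d => ⟪w, x⟫ ^ 2 * ind x)
    rw [← hcomp]
    refine integral_congr_ae (Filter.Eventually.of_forall fun x => ?_)
    have h1 : ⟪w, e x⟫ = ⟪EuclideanSpace.single i0 (1:ℝ), x⟫ := by
      have := b.repr.inner_map_map w (e x)
      rw [← this, LinearIsometryEquiv.apply_symm_apply, ← hbw, b.repr_self]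
    have h2 : ind (e x) = ind x := by
      simp only [hind]
      by_cases h : x ∈ closedBall (0 : E d) 1
      · rw [Set.indicator_of_mem h, Set.indicator_of_mem]
        rw [mem_closedBall_zero_iff] at h ⊢
        rw [e.norm_map]; exact h
      · rw [Set.indicator_of_notMem h, Set.indicator_of_notMem]
        rw [mem_closedBall_zero_iff] at h ⊢
        rw [e.norm_map]; exact h
    simp only [h1, h2]
  -- sum over coordinates
  have hsum : (d:ℝ) * J0 = ∫ x, ‖x‖ ^ 2 * ind x := by
    have hintg : ∀ i : Fin d,
        Integrable (fun x : E d => ⟪EuclideanSpace.single i (1:ℝ), x⟫ ^ 2 * ind x)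
          (volume : Measure (E d)) := by
      intro i
      exact hint _ (((continuous_const.inner continuous_id).pow 2))
    have h1 : ∫ x, (∑ i : Fin d, ⟪EuclideanSpace.single i (1:ℝ), x⟫ ^ 2 * ind x)
        = ∑ i : Fin d, ∫ x, ⟪EuclideanSpace.single i (1:ℝ), x⟫ ^ 2 * ind x :=
      integral_finset_sum Finset.univ (fun i _ => hintg i)
    have h2 : ∀ x : E d, (∑ i : Fin d, ⟪EuclideanSpace.single i (1:ℝ), x⟫ ^ 2 * ind x)
        = ‖x‖ ^ 2 * ind x := by
      intro x
      rw [← Finset.sum_mul]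
      congr 1
      have : ∀ i : Fin d, ⟪EuclideanSpace.single i (1:ℝ), x⟫ = x i := by
        intro i
        rw [EuclideanSpace.inner_single_left]
        simp
      simp_rw [this]
      rw [EuclideanSpace.norm_eq, Real.sq_sqrt (by positivity)]
      refine Finset.sum_congr rfl fun i _ => ?_
      rw [Real.norm_eq_abs, sq_abs]
    have h3 : ∀ i : Fin d, ∫ x, ⟪EuclideanSpace.single i (1:ℝ), x⟫ ^ 2 * ind x = J0 := by
      intro i
      exact hdir _ (by rw [EuclideanSpace.norm_single]; norm_num)
    calc (d:ℝ) * J0 = ∑ _i : Fin d, J0 := by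
          rw [Finset.sum_const, Finset.card_univ, Fintype.card_fin, nsmul_eq_mul]
      _ = ∑ i : Fin d, ∫ x, ⟪EuclideanSpace.single i (1:ℝ), x⟫ ^ 2 * ind x :=
          (Finset.sum_congr rfl fun i _ => (h3 i).symm)
      _ = ∫ x, (∑ i : Fin d, ⟪EuclideanSpace.single i (1:ℝ), x⟫ ^ 2 * ind x) := h1.symm
      _ = ∫ x, ‖x‖ ^ 2 * ind x := by
          refine integral_congr_ae (Filter.Eventually.of_forall fun x => h2 x)
  -- positivity
  have hN : 0 < ∫ x, ‖x‖ ^ 2 * ind x := by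
    rw [hrw (fun x : E d => ‖x‖ ^ 2), integral_indicator measurableSet_closedBall]
    rw [setIntegral_pos_iff_support_of_nonneg_ae (f := fun x : E d => ‖x‖ ^ 2)
      (Filter.Eventually.of_forall fun x => by positivity)
      (((continuous_norm.pow 2).continuousOn).integrableOn_compact (isCompact_closedBall _ _))]
    refine lt_of_lt_of_le (measure_ball_pos volume (0 : E d) one_pos) ?_
    rw [show volume (ball (0 : E d) 1)
        = volume (ball (0 : E d) 1 \ {0}) from (measure_diff_null (measure_singleton _)).symm]
    refine measure_mono fun x hx => ?_
    obtain ⟨hx1, hx2⟩ := hx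
    constructor
    · simp only [Function.mem_support]
      have : x ≠ 0 := by simpa using hx2
      exact pow_ne_zero 2 (norm_ne_zero_iff.mpr this)
    · exact ball_subset_closedBall hx1
  -- conclusion
  by_cases hg : g = 0
  · simp [hg, inner_zero_left]
  · have hgn : ‖g‖ ≠ 0 := norm_ne_zero_iff.mpr hg
    have hw : ‖(‖g‖⁻¹ • g)‖ = 1 := norm_smul_inv_norm hg
    have e1 : (∫ u : sphere (0 : E d) 1, ⟪g, (u : E d)⟫ ^ 2 ∂μS) * C = ‖g‖ ^ 2 * J0 := by
      rw [← hM1 g]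
      have hpt : ∀ x : E d, ⟪g, x⟫ ^ 2 * ind x
          = ‖g‖ ^ 2 * (⟪‖g‖⁻¹ • g, x⟫ ^ 2 * ind x) := by
        intro x
        rw [real_inner_smul_left, mul_pow, inv_pow]
        field_simp
      calc ∫ x, ⟪g, x⟫ ^ 2 * ind x
          = ∫ x, ‖g‖ ^ 2 * (⟪‖g‖⁻¹ • g, x⟫ ^ 2 * ind x) :=
            integral_congr_ae (Filter.Eventually.of_forall hpt)
        _ = ‖g‖ ^ 2 * ∫ x, ⟪‖g‖⁻¹ • g, x⟫ ^ 2 * ind x := integral_const_mul _ _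
        _ = ‖g‖ ^ 2 * J0 := by rw [hdir _ hw]
    have e2 : massR * C = (d:ℝ) * J0 := by rw [← hM2, ← hsum]
    have hC0 : C ≠ 0 := by
      intro h
      rw [← hsum] at hN
      rw [h, mul_zero] at e2
      linarith
    have key : ((∫ u : sphere (0 : E d) 1, ⟪g, (u : E d)⟫ ^ 2 ∂μS) * (d:ℝ)) * C
        = (‖g‖ ^ 2 * massR) * C := by linear_combination (d:ℝ) * e1 - ‖g‖ ^ 2 * e2
    have key2 := mul_right_cancel₀ hC0 key
    rw [div_mul_eq_mul_div, eq_div_iff hd0]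
    linarith [key2]

/-- The uniform probability measure (normalized surface measure) on the unit sphere
of `ℝ^d`. -/
noncomputable def uniformUnitSphere (d : ℕ) :
    Measure (Metric.sphere (0 : EuclideanSpace ℝ (Fin d)) 1) :=
  ((volume : Measure (EuclideanSpace ℝ (Fin d))).toSphere Set.univ)⁻¹ •
    (volume : Measure (EuclideanSpace ℝ (Fin d))).toSphere

lemma mass_ne_zero (d : ℕ) (hd : 1 ≤ d) :
    ((volume : Measure (E d)).toSphere) univ ≠ 0 := by
  haveI : Nontrivial (E d) := by
    refine Module.nontrivial_of_finrank_pos (R := ℝ) ?_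
    rw [finrank_euclideanSpace_fin]; omega
  rw [Measure.toSphere_apply_univ]
  refine mul_ne_zero ?_ (measure_ball_pos volume (0 : E d) one_pos).ne'
  simp only [ne_eq, Nat.cast_eq_zero, finrank_euclideanSpace_fin]
  omega

lemma mass_ne_top (d : ℕ) :
    ((volume : Measure (E d)).toSphere) univ ≠ ⊤ := measure_ne_top _ _

lemma isProb (d : ℕ) (hd : 1 ≤ d) : IsProbabilityMeasure (uniformUnitSphere d) := by
  constructor
  rw [uniformUnitSphere, Measure.smul_apply, smul_eq_mul]
  exact ENNReal.inv_mul_cancel (mass_ne_zero d hd) (mass_ne_top d)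

lemma uniform_moment (d : ℕ) (hd : 1 ≤ d) (g : E d) :
    ∫ u : sphere (0 : E d) 1, ⟪g, (u : E d)⟫ ^ 2 ∂(uniformUnitSphere d)
      = ‖g‖ ^ 2 / d := by
  rw [uniformUnitSphere, integral_smul_measure, sphere_moment d hd g, ENNReal.toReal_inv]
  rw [smul_eq_mul]
  have h1 : (((volume : Measure (E d)).toSphere) univ).toReal ≠ 0 :=
    ENNReal.toReal_ne_zero.mpr ⟨mass_ne_zero d hd, mass_ne_top d⟩
  rw [mul_comm, mul_assoc, mul_inv_cancel₀ h1, mul_one]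

end Aux

set_option maxHeartbeats 2000000 in
/-- Second-moment smoothness of the uniform smoothing gradient estimator:
`E_{u ~ Unif(S)} ‖(d/β)(f(x+βu)−f(x))u − (d/β)(f(y+βu)−f(y))u‖²
  ≤ 3 d L² ‖x−y‖² + (3/2) L² d² β²`. -/
theorem uniform_smoothing_second_moment_smoothness
    (d : ℕ) (hd : 1 ≤ d)
    (f : EuclideanSpace ℝ (Fin d) → ℝ)
    (L : ℝ) (hL : 0 < L)
    (hdiff : Differentiable ℝ f)
    (hLip : ∀ u v, ‖gradient f u - gradient f v‖ ≤ L * ‖u - v‖)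
    (β : ℝ) (hβ : 0 < β)
    (x y : EuclideanSpace ℝ (Fin d)) :
    (∫ u : Metric.sphere (0 : EuclideanSpace ℝ (Fin d)) 1,
      ‖(((d : ℝ) / β) * (f (x + β • (u : EuclideanSpace ℝ (Fin d))) - f x)) •
          (u : EuclideanSpace ℝ (Fin d)) -
        (((d : ℝ) / β) * (f (y + β • (u : EuclideanSpace ℝ (Fin d))) - f y)) •
          (u : EuclideanSpace ℝ (Fin d))‖ ^ 2 ∂(uniformUnitSphere d))
      ≤ 3 * d * L ^ 2 * ‖x - y‖ ^ 2 + 3 / 2 * L ^ 2 * (d : ℝ) ^ 2 * β ^ 2 := by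
  haveI := isProb d hd
  have hd0 : (d:ℝ) ≠ 0 := Nat.cast_ne_zero.mpr (by omega)
  set g : EuclideanSpace ℝ (Fin d) := gradient f x - gradient f y with hg
  have hgle : ‖g‖ ≤ L * ‖x - y‖ := hLip x y
  have hgsq : ‖g‖ ^ 2 ≤ L ^ 2 * ‖x - y‖ ^ 2 := by
    nlinarith [norm_nonneg g, norm_nonneg (x - y), mul_nonneg hL.le (norm_nonneg (x - y))]
  -- pointwise bound
  have hpt : ∀ u : sphere (0 : EuclideanSpace ℝ (Fin d)) 1,
      ‖(((d : ℝ) / β) * (f (x + β • (u : EuclideanSpace ℝ (Fin d))) - f x)) • (u : EuclideanSpace ℝ (Fin d)) -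
        (((d : ℝ) / β) * (f (y + β • (u : EuclideanSpace ℝ (Fin d))) - f y)) • (u : EuclideanSpace ℝ (Fin d))‖ ^ 2
      ≤ 3 * (d:ℝ)^2 * ⟪g, (u : EuclideanSpace ℝ (Fin d))⟫ ^ 2 + 3/2 * (d:ℝ)^2 * L^2 * β^2 := by
    intro u
    have hu : ‖(u : EuclideanSpace ℝ (Fin d))‖ = 1 := mem_sphere_zero_iff_norm.mp u.2
    have hβu : ‖β • (u : EuclideanSpace ℝ (Fin d))‖ = β := by
      rw [norm_smul, hu, Real.norm_eq_abs, abs_of_pos hβ, mul_one]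
    have hPx := taylor_bound f L hdiff hLip x (β • (u : EuclideanSpace ℝ (Fin d)))
    have hPy := taylor_bound f L hdiff hLip y (β • (u : EuclideanSpace ℝ (Fin d)))
    rw [hβu] at hPx hPy
    set P := f (x + β • (u : EuclideanSpace ℝ (Fin d))) - f x - ⟪gradient f x, β • (u : EuclideanSpace ℝ (Fin d))⟫ with hP
    set Q := f (y + β • (u : EuclideanSpace ℝ (Fin d))) - f y - ⟪gradient f y, β • (u : EuclideanSpace ℝ (Fin d))⟫ with hQ
    set s := ⟪g, (u : EuclideanSpace ℝ (Fin d))⟫ with hs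
    rw [← sub_smul, norm_smul, hu, mul_one, Real.norm_eq_abs, sq_abs]
    have hkey : ((d:ℝ)/β) * (f (x + β • (u : EuclideanSpace ℝ (Fin d))) - f x)
        - ((d:ℝ)/β) * (f (y + β • (u : EuclideanSpace ℝ (Fin d))) - f y)
        = (d:ℝ) * (s + (P - Q)/β) := by
      have h1 : f (x + β • (u : EuclideanSpace ℝ (Fin d))) - f x = P + β * ⟪gradient f x, (u : EuclideanSpace ℝ (Fin d))⟫ := by
        rw [hP, real_inner_smul_right]; ring
      have h2 : f (y + β • (u : EuclideanSpace ℝ (Fin d))) - f y = Q + β * ⟪gradient f y, (u : EuclideanSpace ℝ (Fin d))⟫ := by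
        rw [hQ, real_inner_smul_right]; ring
      have h3 : s = ⟪gradient f x, (u : EuclideanSpace ℝ (Fin d))⟫ - ⟪gradient f y, (u : EuclideanSpace ℝ (Fin d))⟫ := by
        rw [hs, hg, inner_sub_left]
      rw [h1, h2, h3]
      field_simp
      ring
    rw [hkey]
    set t := (P - Q)/β with ht
    have habs : |P - Q| ≤ L * β * β := by
      rw [sub_eq_add_neg]
      refine (abs_add_le P (-Q)).trans ?_
      rw [abs_neg]
      calc |P| + |Q| ≤ L/2*β^2 + L/2*β^2 := add_le_add hPx hPy
        _ = L * β * β := by ring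
    have htb : |t| ≤ L * β := by
      rw [ht, abs_div, abs_of_pos hβ, div_le_iff₀ hβ]
      exact habs
    have h1 : t^2 ≤ (L*β)^2 := sq_le_sq' (abs_le.mp htb).1 (abs_le.mp htb).2
    have h2 : (0:ℝ) ≤ (d:ℝ)^2 := sq_nonneg _
    nlinarith [mul_le_mul_of_nonneg_left h1 h2, mul_nonneg h2 (sq_nonneg (2*s - t))]
  -- continuity and integrability
  have hfc : Continuous f := hdiff.continuous
  have hcoe : Continuous fun u : sphere (0 : EuclideanSpace ℝ (Fin d)) 1 => (u : EuclideanSpace ℝ (Fin d)) := continuous_subtype_val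
  have hc1 : Continuous fun u : sphere (0 : EuclideanSpace ℝ (Fin d)) 1 =>
      ‖(((d : ℝ) / β) * (f (x + β • (u : EuclideanSpace ℝ (Fin d))) - f x)) • (u : EuclideanSpace ℝ (Fin d)) -
        (((d : ℝ) / β) * (f (y + β • (u : EuclideanSpace ℝ (Fin d))) - f y)) • (u : EuclideanSpace ℝ (Fin d))‖ ^ 2 := by
    refine Continuous.pow (Continuous.norm (Continuous.sub ?_ ?_)) 2 <;>
    · refine Continuous.fun_smul ?_ hcoe
      refine continuous_const.mul (Continuous.sub ?_ continuous_const)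
      exact hfc.comp (continuous_const.add (hcoe.const_smul β))
  have hc2 : Continuous fun u : sphere (0 : EuclideanSpace ℝ (Fin d)) 1 =>
      3 * (d:ℝ)^2 * ⟪g, (u : EuclideanSpace ℝ (Fin d))⟫ ^ 2 + 3/2 * (d:ℝ)^2 * L^2 * β^2 := by
    refine Continuous.add (continuous_const.mul (Continuous.pow ?_ 2)) continuous_const
    exact Continuous.inner continuous_const hcoe
  have hInt1 : Integrable (fun u : sphere (0 : EuclideanSpace ℝ (Fin d)) 1 =>
      ‖(((d : ℝ) / β) * (f (x + β • (u : EuclideanSpace ℝ (Fin d))) - f x)) • (u : EuclideanSpace ℝ (Fin d)) -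
        (((d : ℝ) / β) * (f (y + β • (u : EuclideanSpace ℝ (Fin d))) - f y)) • (u : EuclideanSpace ℝ (Fin d))‖ ^ 2) (uniformUnitSphere d) :=
    hc1.integrable_of_hasCompactSupport
      (IsCompact.of_isClosed_subset isCompact_univ (isClosed_tsupport _) (subset_univ _))
  have hInt2 : Integrable (fun u : sphere (0 : EuclideanSpace ℝ (Fin d)) 1 =>
      3 * (d:ℝ)^2 * ⟪g, (u : EuclideanSpace ℝ (Fin d))⟫ ^ 2 + 3/2 * (d:ℝ)^2 * L^2 * β^2) (uniformUnitSphere d) :=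
    hc2.integrable_of_hasCompactSupport
      (IsCompact.of_isClosed_subset isCompact_univ (isClosed_tsupport _) (subset_univ _))
  have hInt3 : Integrable (fun u : sphere (0 : EuclideanSpace ℝ (Fin d)) 1 =>
      3 * (d:ℝ)^2 * ⟪g, (u : EuclideanSpace ℝ (Fin d))⟫ ^ 2) (uniformUnitSphere d) :=
    (continuous_const.mul ((Continuous.inner continuous_const hcoe).pow 2)).integrable_of_hasCompactSupport
      (IsCompact.of_isClosed_subset isCompact_univ (isClosed_tsupport _) (subset_univ _))
  calc (∫ u : sphere (0 : EuclideanSpace ℝ (Fin d)) 1,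
      ‖(((d : ℝ) / β) * (f (x + β • (u : EuclideanSpace ℝ (Fin d))) - f x)) • (u : EuclideanSpace ℝ (Fin d)) -
        (((d : ℝ) / β) * (f (y + β • (u : EuclideanSpace ℝ (Fin d))) - f y)) • (u : EuclideanSpace ℝ (Fin d))‖ ^ 2 ∂(uniformUnitSphere d))
      ≤ ∫ u : sphere (0 : EuclideanSpace ℝ (Fin d)) 1,
        (3 * (d:ℝ)^2 * ⟪g, (u : EuclideanSpace ℝ (Fin d))⟫ ^ 2 + 3/2 * (d:ℝ)^2 * L^2 * β^2) ∂(uniformUnitSphere d) :=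
      integral_mono hInt1 hInt2 hpt
    _ = 3 * (d:ℝ)^2 * (‖g‖^2 / d) + 3/2 * (d:ℝ)^2 * L^2 * β^2 := by
      rw [integral_add hInt3 (integrable_const _), integral_const, probReal_univ]
      simp only [one_smul]
      congr 1
      rw [integral_const_mul, uniform_moment d hd g]
    _ = 3 * (d:ℝ) * ‖g‖^2 + 3/2 * (d:ℝ)^2 * L^2 * β^2 := by
      field_simp
    _ ≤ 3 * d * L ^ 2 * ‖x - y‖ ^ 2 + 3 / 2 * L ^ 2 * (d : ℝ) ^ 2 * β ^ 2 := by
      have hd1 : (0:ℝ) ≤ (d:ℝ) := Nat.cast_nonneg d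
      nlinarith [mul_le_mul_of_nonneg_left hgsq (by positivity : (0:ℝ) ≤ 3 * (d:ℝ))]
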